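/- G(ω,132) and G(ω+ω,132) are not isomorphic as graphs. -/

import Mathlib

/-- Vertices: pairs of ordinals `(x, y)` with `x < y < o`. -/
abbrev OV (o : Ordinal) := {p : Ordinal × Ordinal // p.1 < p.2 ∧ p.2 < o}

/-- The shift graph `G(o, 132)` on an ordinal `o`. -/
def OG132 (o : Ordinal) : SimpleGraph (OV o) where
  Adj a b := a.val.2 = b.val.1 ∨ b.val.2 = a.val.1
  symm := ⟨fun a b h => Or.symm h⟩
  loopless := ⟨fun a h => by rcases h with h | h <;> exact a.prop.1.ne' h⟩

open Ordinal

def CNbr {V : Type*} (G : SimpleGraph V) (a b : V) : Set V :=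
  {c | G.Adj a c ∧ G.Adj b c}

def QQ {V : Type*} (G : SimpleGraph V) (a b : V) : Prop := (CNbr G a b).Infinite

lemma finite_Iio_of_lt_omega {o : Ordinal} (h : o < omega0) : (Set.Iio o).Finite := by
  obtain ⟨n, rfl⟩ := lt_omega0.mp h
  have : Set.Iio ((n : Ordinal)) ⊆ Nat.cast '' Set.Iio n := by
    intro p hp
    obtain ⟨m, rfl⟩ := lt_omega0.mp (hp.trans (nat_lt_omega0 n))
    exact ⟨m, by simpa using hp, rfl⟩
  exact ((Set.finite_Iio n).image _).subset this

lemma finite_snd_eq {o : Ordinal} (x : Ordinal) (hx : x < omega0) :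
    {c : OV o | c.val.2 = x}.Finite := by
  have h1 : (fun c : OV o => c.val.1) '' {c : OV o | c.val.2 = x} ⊆ Set.Iio x := by
    rintro _ ⟨c, hc, rfl⟩
    exact hc ▸ c.prop.1
  refine Set.Finite.of_finite_image (((finite_Iio_of_lt_omega hx).subset h1)) ?_
  intro c hc d hd h
  exact Subtype.ext (Prod.ext h (hc.trans hd.symm))

/-- In `G(ω)`, two vertices with infinitely many common neighbours share second coord. -/
lemma lemA (a b : OV omega0) (h : QQ (OG132 omega0) a b) : a.val.2 = b.val.2 := by
  by_contra hne
  apply h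
  have hsub : CNbr (OG132 omega0) a b ⊆
      {c : OV omega0 | c.val.2 = a.val.1} ∪
      ({c | c.val = (a.val.2, b.val.1)} ∪ {c | c.val = (b.val.2, a.val.1)}) := by
    rintro c ⟨hac, hbc⟩
    rcases hac with h1 | h1 <;> rcases hbc with h2 | h2
    · exact absurd (h1.trans h2.symm) hne
    · exact Or.inr (Or.inl (Prod.ext h1.symm h2))
    · exact Or.inr (Or.inr (Prod.ext h2.symm h1))
    · exact Or.inl h1
  have hfin : ({c : OV omega0 | c.val.2 = a.val.1} ∪
      ({c | c.val = (a.val.2, b.val.1)} ∪ {c | c.val = (b.val.2, a.val.1)})).Finite := by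
    refine (finite_snd_eq _ (a.prop.1.trans ((a.prop.2.trans_le le_rfl)))).union
      (Set.Finite.union ?_ ?_) <;>
    exact Set.Subsingleton.finite (fun x hx y hy => Subtype.ext (hx.trans hy.symm))
  exact hfin.subset hsub

lemma QQ_map {V W : Type*} {G : SimpleGraph V} {H : SimpleGraph W} (f : G ≃g H)
    (a b : V) (h : QQ G a b) : QQ H (f a) (f b) := by
  have himg : f '' CNbr G a b ⊆ CNbr H (f a) (f b) := by
    rintro _ ⟨c, ⟨h1, h2⟩, rfl⟩
    exact ⟨f.map_adj_iff.mpr h1, f.map_adj_iff.mpr h2⟩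
  exact ((h.image (f.injective.injOn)).mono himg)

universe u v

lemma key : ¬ Nonempty (OG132 omega0.{v} ≃g OG132 (omega0.{u} + omega0.{u})) := by
  rintro ⟨f⟩
  set g := f.symm with hg
  have hω : (omega0.{u} : Ordinal) < omega0 + omega0 := by
    simpa using add_lt_add_left omega0_pos omega0
  have h1 : omega0.{u} + 1 < omega0 + omega0 := (add_lt_add_iff_left _).mpr one_lt_omega0
  have h2 : omega0.{u} + 2 < omega0 + omega0 := by
    exact_mod_cast (add_lt_add_iff_left omega0).mpr (nat_lt_omega0 2)
  have hlt1 : (omega0.{u} : Ordinal) < omega0 + 1 := by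
    simpa using add_lt_add_left (zero_lt_one) omega0
  have hlt2 : (omega0.{u} : Ordinal) < omega0 + 2 := by
    have h : (0:Ordinal.{u}) < 2 := by norm_num
    simpa using add_lt_add_left h omega0
  let a : OV (omega0 + omega0) := ⟨(omega0, omega0 + 1), hlt1, h1⟩
  let b : OV (omega0 + omega0) := ⟨(omega0, omega0 + 2), hlt2, h2⟩
  have hab : a ≠ b := by
    intro h
    have := congrArg (fun v : OV (omega0+omega0) => v.val.2) h
    simp only [a, b] at this
    have h12 : (1 : Ordinal) = 2 := (add_left_cancel_iff (a := omega0)).mp this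
    norm_num at h12
  -- common neighbours of a and b : all (n, ω)
  have hQab : QQ (OG132 (omega0.{u} + omega0)) a b := by
    apply Set.infinite_of_injective_forall_mem
      (f := fun n : ℕ => (⟨((n : Ordinal), omega0), nat_lt_omega0 n, hω⟩ : OV (omega0.{u} + omega0)))
    case hi =>
      intro m n hmn
      have := congrArg (fun v : OV (omega0.{u}+omega0) => v.val.1) hmn
      simpa using this
    case hf =>
      intro n
      exact ⟨Or.inr rfl, Or.inr rfl⟩
  let w1 : OV (omega0.{u} + omega0) := ⟨(0, omega0), omega0_pos, hω⟩
  let w2 : OV (omega0.{u} + omega0) := ⟨(1, omega0), one_lt_omega0, hω⟩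
  have hw12 : w1 ≠ w2 := by
    intro h
    have := congrArg (fun v : OV (omega0.{u}+omega0) => v.val.1) h
    simp only [w1, w2] at this
    norm_num at this
  have hw1 : w1 ∈ CNbr (OG132 (omega0.{u} + omega0)) a b := ⟨Or.inr rfl, Or.inr rfl⟩
  have hw2 : w2 ∈ CNbr (OG132 (omega0.{u} + omega0)) a b := ⟨Or.inr rfl, Or.inr rfl⟩
  have hQw : QQ (OG132 (omega0.{u} + omega0)) w1 w2 := by
    have hlt : ∀ n : ℕ, (omega0.{u} : Ordinal) < omega0 + (n+1 : ℕ) := by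
      intro n
      have h0 : (0 : Ordinal.{u}) < (n+1 : ℕ) := by exact_mod_cast Nat.succ_pos n
      simpa using add_lt_add_left h0 omega0
    have hlt2' : ∀ n : ℕ, omega0.{u} + (n+1 : ℕ) < omega0 + omega0 :=
      fun n => (add_lt_add_iff_left _).mpr (nat_lt_omega0 (n+1))
    apply Set.infinite_of_injective_forall_mem
      (f := fun n : ℕ => (⟨(omega0, omega0 + (n+1 : ℕ)), hlt n, hlt2' n⟩ :
        OV (omega0.{u} + omega0)))
    case hi =>
      intro m n hmn
      have := congrArg (fun v : OV (omega0.{u}+omega0) => v.val.2) hmn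
      simp only at this
      have := (add_left_cancel_iff (a := omega0)).mp this
      have : m + 1 = n + 1 := by exact_mod_cast this
      omega
    case hf =>
      intro n
      exact ⟨Or.inl rfl, Or.inl rfl⟩
  -- transport through g
  have hQab' : QQ (OG132 omega0.{v}) (g a) (g b) := QQ_map g a b hQab
  have hQw' : QQ (OG132 omega0.{v}) (g w1) (g w2) := QQ_map g w1 w2 hQw
  have hgab : (g a).val.2 = (g b).val.2 := lemA _ _ hQab'
  have hgab_ne : g a ≠ g b := fun h => hab (g.injective h)
  have hmem : ∀ w : OV (omega0.{u} + omega0), w ∈ CNbr (OG132 (omega0.{u} + omega0)) a b →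
      (g w).val.1 = (g a).val.2 := by
    rintro w ⟨h1, h2⟩
    have h1' : (OG132 omega0.{v}).Adj (g a) (g w) := g.map_adj_iff.mpr h1
    have h2' : (OG132 omega0.{v}).Adj (g b) (g w) := g.map_adj_iff.mpr h2
    rcases h1' with h1' | h1' <;> rcases h2' with h2' | h2'
    · exact h1'.symm
    · exact h1'.symm
    · exact hgab ▸ h2'.symm
    · exact absurd (Subtype.ext (Prod.ext (h1'.symm.trans h2') hgab)) hgab_ne
  have e1 : (g w1).val.1 = (g a).val.2 := hmem w1 hw1
  have e2 : (g w2).val.1 = (g a).val.2 := hmem w2 hw2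
  have e3 : (g w1).val.2 = (g w2).val.2 := lemA _ _ hQw'
  have : g w1 = g w2 := Subtype.ext (Prod.ext (e1.trans e2.symm) e3)
  exact hw12 (g.injective this)

open Ordinal in
/-- `G(ω,132)` and `G(ω+ω,132)` are not isomorphic. -/
theorem stmt_5 : ¬ Nonempty (OG132 omega0 ≃g OG132 (omega0 + omega0)) := by
  exact key
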